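/- arXiv:2602.20032 — 2 statements merged into one kernel-verified Lean document; each statement's English description precedes it below -/
import Mathlib

section
/- Let B be a Bratteli diagram with finitely many sources and let ℓ be the associated length function. Then for every ε > 0 there exists M ≥ 0 such that for every infinite path y ∈ X_B, the sum Σ ℓ(x,y)^{−2}, taken over all x ∈ X_B tail-equivalent to y with ℓ(x,y) > M, is at most ε. Equivalently, sup_{y∈X_B} Σ_{x ~ y, ℓ(x,y)>M} ℓ(x,y)^{−2} → 0 as M → ∞. -/
/-- A Bratteli diagram: nonempty finite vertex levels `V n` (`n ≥ 0`), finite edge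
sets `E n` consisting of the edges from level `n` to level `n + 1`, with source and
target maps, such that every vertex emits at least one edge. -/
structure BratteliDiagram where
  V : ℕ → Type
  E : ℕ → Type
  vFinite : ∀ n, Finite (V n)
  vNonempty : ∀ n, Nonempty (V n)
  eFinite : ∀ n, Finite (E n)
  src : ∀ n, E n → V n
  tgt : ∀ n, E n → V (n + 1)
  src_surjective : ∀ n, Function.Surjective (src n)

namespace BratteliDiagram

variable (B : BratteliDiagram)

/-- A vertex is a source if no edge has it as its target (in particular, every
level-0 vertex is a source). -/
def IsSource : (n : ℕ) → B.V n → Prop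
  | 0, _ => True
  | n + 1, v => ¬ ∃ e : B.E n, B.tgt n e = v

/-- `B` has finitely many sources: beyond some level there are no sources. -/
def FinSources : Prop :=
  ∃ N : ℕ, ∀ n : ℕ, N < n → ∀ v : B.V n, ¬ B.IsSource n v

/-- The type of finite paths in `B` starting at some source and ending at the
vertex `w` of level `k` (including the empty path when `w` itself is a source). -/
def PathEnd : (k : ℕ) → B.V k → Type
  | 0, w => PLift (B.IsSource 0 w)
  | k + 1, w =>
      PLift (B.IsSource (k + 1) w) ⊕
        Σ e : B.E k, PLift (B.tgt k e = w) × PathEnd k (B.src k e)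

/-- `c_k = Σ_{v ∈ S(B)} |P(v, V_k)|`: the total number of finite paths from the
sources of `B` to level `k`. -/
noncomputable def pathCount (k : ℕ) : ℕ :=
  Nat.card (Σ w : B.V k, B.PathEnd k w)

/-- An infinite path of `B` starting at a source: `edge n _` is the edge from
level `n` to level `n + 1` followed by the path (defined for `n ≥ start`). -/
structure InfPath where
  start : ℕ
  edge : ∀ n, start ≤ n → B.E n
  start_isSource : B.IsSource start (B.src start (edge start le_rfl))
  compat : ∀ n (h : start ≤ n),
    B.src (n + 1) (edge (n + 1) (h.trans (Nat.le_succ n))) = B.tgt n (edge n h)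

variable {B}

/-- `x` and `y` both start at level at most `m` and their edges agree from
level `m` on (i.e. `x_n = y_n` for all paper-levels `n > m`). -/
def AgreesFrom (x y : B.InfPath) (m : ℕ) : Prop :=
  ∃ (hx : x.start ≤ m) (hy : y.start ≤ m),
    ∀ n (h : m ≤ n), x.edge n (hx.trans h) = y.edge n (hy.trans h)

/-- Tail equivalence of infinite paths. -/
def TailEquiv (x y : B.InfPath) : Prop :=
  ∃ m : ℕ, AgreesFrom x y m

/-- `k(x,y)`: the least level from which the infinite paths `x` and `y` agree. -/
noncomputable def kIdx (x y : B.InfPath) : ℕ :=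
  sInf {m : ℕ | AgreesFrom x y m}

/-- The length function associated with the Bratteli diagram `B`:
`ℓ(x,y) = c_{k(x,y)}` for `x ≠ y` and `ℓ(x,x) = 0`. -/
noncomputable def len (x y : B.InfPath) : ℕ :=
  letI := Classical.dec (x = y)
  if x = y then 0 else B.pathCount (kIdx x y)

end BratteliDiagram

namespace BratteliDiagram

variable {B : BratteliDiagram}

lemma finite_pathEnd (B : BratteliDiagram) : ∀ (k : ℕ) (w : B.V k), Finite (B.PathEnd k w) := by
  intro k
  induction k with
  | zero => intro w; exact inferInstanceAs (Finite (PLift (B.IsSource 0 w)))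
  | succ k ih =>
      intro w
      haveI := B.eFinite k
      haveI : ∀ e : B.E k, Finite (PLift (B.tgt k e = w) × B.PathEnd k (B.src k e)) := by
        intro e; haveI := ih (B.src k e); exact inferInstance
      exact inferInstanceAs (Finite (PLift (B.IsSource (k+1) w) ⊕
        Σ e : B.E k, PLift (B.tgt k e = w) × B.PathEnd k (B.src k e)))

lemma nonempty_pathEndSigma (B : BratteliDiagram) :
    ∀ k : ℕ, Nonempty (Σ w : B.V k, B.PathEnd k w) := by
  intro k
  induction k with
  | zero =>
      obtain ⟨v⟩ := B.vNonempty 0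
      exact ⟨⟨v, PLift.up trivial⟩⟩
  | succ k ih =>
      obtain ⟨⟨w, p⟩⟩ := ih
      obtain ⟨e, he⟩ := B.src_surjective k w
      exact ⟨⟨B.tgt k e, Sum.inr ⟨e, ⟨PLift.up rfl, cast (congrArg (B.PathEnd k) he.symm) p⟩⟩⟩⟩

def vertexAt (x : B.InfPath) (k : ℕ) (h : x.start ≤ k) : B.V k := B.src k (x.edge k h)

lemma isSource_of_start_eq (x : B.InfPath) (k : ℕ) (h : x.start = k) :
    B.IsSource k (B.src k (x.edge k (le_of_eq h))) := by
  cases h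
  exact x.start_isSource

def prefixPath (x : B.InfPath) : ∀ (k : ℕ) (h : x.start ≤ k), B.PathEnd k (vertexAt x k h)
  | 0, _ => PLift.up trivial
  | (k+1), h =>
      if hk : x.start ≤ k then
        Sum.inr ⟨x.edge k hk, ⟨PLift.up (x.compat k hk).symm, prefixPath x k hk⟩⟩
      else
        Sum.inl (PLift.up (isSource_of_start_eq x (k+1) (le_antisymm h (not_le.mp hk))))

def peStart : ∀ (k : ℕ) (w : B.V k), B.PathEnd k w → ℕ
  | 0, _, _ => 0
  | (k+1), _, p =>
      match p with
      | Sum.inl _ => k + 1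
      | Sum.inr ⟨e, _, q⟩ => peStart k (B.src k e) q

def peEdge : ∀ (k : ℕ) (w : B.V k), B.PathEnd k w → ∀ n : ℕ, Option (B.E n)
  | 0, _, _, _ => none
  | (k+1), _, p, n =>
      match p with
      | Sum.inl _ => none
      | Sum.inr ⟨e, _, q⟩ =>
          if h : n = k then some (cast (congrArg B.E h.symm) e) else peEdge k (B.src k e) q n

end BratteliDiagram

namespace BratteliDiagram

variable {B : BratteliDiagram}

lemma peStart_prefixPath (x : B.InfPath) : ∀ (k : ℕ) (h : x.start ≤ k),
    peStart k (vertexAt x k h) (prefixPath x k h) = x.start := by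
  intro k
  induction k with
  | zero => intro h; exact (Nat.le_zero.mp h).symm
  | succ k ih =>
      intro h
      by_cases hk : x.start ≤ k
      · rw [prefixPath]; erw [dif_pos hk]
        exact ih hk
      · rw [prefixPath]; erw [dif_neg hk]
        exact (le_antisymm h (not_le.mp hk)).symm

lemma peEdge_prefixPath (x : B.InfPath) : ∀ (k : ℕ) (hk : x.start ≤ k)
    (n : ℕ) (hn : x.start ≤ n), n < k →
    peEdge k (vertexAt x k hk) (prefixPath x k hk) n = some (x.edge n hn) := by
  intro k
  induction k with
  | zero => intro _ n _ h2; omega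
  | succ k ih =>
      intro hk n hn h2
      by_cases hxk : x.start ≤ k
      · rw [prefixPath]; erw [dif_pos hxk]
        by_cases hnk : n = k
        · subst hnk
          erw [peEdge]
          simp
        · have hnk' : n < k := by omega
          erw [peEdge]
          simp only [hnk, dif_neg]
          exact ih hxk n hn hnk'
      · omega

lemma InfPath.ext' {x x' : B.InfPath} (hs : x.start = x'.start)
    (he : ∀ n (h : x.start ≤ n) (h' : x'.start ≤ n), x.edge n h = x'.edge n h') : x = x' := by
  obtain ⟨s, f, p1, p2⟩ := x
  obtain ⟨s', f', p1', p2'⟩ := x'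
  dsimp at hs he
  subst hs
  have hf : f = f' := by
    funext n h
    exact he n h h
  subst hf
  rfl

lemma AgreesFrom.mono {x y : B.InfPath} {m n : ℕ} (h : AgreesFrom x y m) (hmn : m ≤ n) :
    AgreesFrom x y n := by
  obtain ⟨hx, hy, ha⟩ := h
  exact ⟨hx.trans hmn, hy.trans hmn, fun p hp => ha p (hmn.trans hp)⟩

lemma agreesFrom_kIdx {x y : B.InfPath} (h : TailEquiv x y) : AgreesFrom x y (kIdx x y) :=
  Nat.sInf_mem h

lemma prefix_inj {y x x' : B.InfPath} {k : ℕ}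
    (hx : x.start ≤ k) (hx' : x'.start ≤ k) (hy : y.start ≤ k)
    (ex : ∀ n (h : k ≤ n), x.edge n (hx.trans h) = y.edge n (hy.trans h))
    (ex' : ∀ n (h : k ≤ n), x'.edge n (hx'.trans h) = y.edge n (hy.trans h))
    (hpre : (⟨vertexAt x k hx, prefixPath x k hx⟩ : Σ w, B.PathEnd k w)
          = ⟨vertexAt x' k hx', prefixPath x' k hx'⟩) : x = x' := by
  have hstart : x.start = x'.start := by
    have h1 := congrArg (fun z : Σ w, B.PathEnd k w => peStart k z.1 z.2) hpre
    dsimp at h1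
    rw [peStart_prefixPath, peStart_prefixPath] at h1
    exact h1
  apply InfPath.ext' hstart
  intro n h h'
  rcases lt_or_ge n k with hnk | hnk
  · have h1 := congrArg (fun z : Σ w, B.PathEnd k w => peEdge k z.1 z.2 n) hpre
    dsimp at h1
    rw [peEdge_prefixPath x k hx n h hnk, peEdge_prefixPath x' k hx' n h' hnk] at h1
    exact Option.some.inj h1
  · exact (ex n hnk).trans (ex' n hnk).symm

lemma len_eq {x y : B.InfPath} (hxy : x ≠ y) : len x y = B.pathCount (kIdx x y) := by
  unfold len
  rw [if_neg hxy]

lemma len_self (y : B.InfPath) : len y y = 0 := by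
  unfold len
  rw [if_pos rfl]

end BratteliDiagram

private lemma sumAux {α : Type*} [DecidableEq α] (K : ℕ) (hK : 1 ≤ K) :
    ∀ (n : ℕ) (F : Finset α) (v : α → ℕ), F.card = n →
      (∀ x ∈ F, K ≤ v x) → (∀ j : ℕ, (F.filter fun x => v x ≤ j).card ≤ j) →
      ∑ x ∈ F, ((v x : ℝ))⁻¹ ^ 2 ≤
        ((min n K : ℕ) : ℝ) / (K : ℝ) ^ 2 + (1 / (K : ℝ) - 1 / ((max n K : ℕ) : ℝ)) := by
  intro n
  induction n with
  | zero =>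
      intro F v hc _ _
      rw [Finset.card_eq_zero.mp hc]
      simp
  | succ n ih =>
      intro F v hc hv hsp
      have hKpos : (0 : ℝ) < K := by exact_mod_cast hK
      have hFne : F.Nonempty := Finset.card_pos.mp (by omega)
      obtain ⟨x₀, hx₀, hmax⟩ := Finset.exists_max_image F v hFne
      have hcard : n + 1 ≤ v x₀ := by
        have h1 := hsp (v x₀)
        rw [Finset.filter_true_of_mem (fun x hx => hmax x hx)] at h1
        omega
      have hKv : K ≤ v x₀ := hv x₀ hx₀
      have hvpos : (0 : ℝ) < v x₀ := by
        have : 0 < v x₀ := by omega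
        exact_mod_cast this
      have hc' : (F.erase x₀).card = n := by
        rw [Finset.card_erase_of_mem hx₀, hc]
        omega
      have hv' : ∀ x ∈ F.erase x₀, K ≤ v x := fun x hx => hv x (Finset.mem_of_mem_erase hx)
      have hsp' : ∀ j, ((F.erase x₀).filter fun x => v x ≤ j).card ≤ j := fun j =>
        le_trans (Finset.card_le_card
          (Finset.filter_subset_filter _ (Finset.erase_subset _ _))) (hsp j)
      have IH := ih (F.erase x₀) v hc' hv' hsp'
      rw [← Finset.sum_erase_add F _ hx₀]
      have hterm : ((v x₀ : ℝ))⁻¹ ^ 2 ≤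
          (((min (n+1) K : ℕ) : ℝ) / (K : ℝ) ^ 2 - ((min n K : ℕ) : ℝ) / (K : ℝ) ^ 2)
          + (1 / ((max n K : ℕ) : ℝ) - 1 / ((max (n+1) K : ℕ) : ℝ)) := by
        rcases le_or_gt (n + 1) K with h | h
        · have h1 : min (n+1) K = n+1 := by omega
          have h2 : min n K = n := by omega
          have h3 : max n K = K := by omega
          have h4 : max (n+1) K = K := by omega
          rw [h1, h2, h3, h4]
          have hle : ((v x₀ : ℝ))⁻¹ ^ 2 ≤ ((K : ℝ))⁻¹ ^ 2 := by
            have h5 : (K : ℝ) ≤ (v x₀ : ℝ) := by exact_mod_cast hKv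
            gcongr
          have heq : (((n+1 : ℕ) : ℝ)) / (K : ℝ) ^ 2 - ((n : ℕ) : ℝ) / (K : ℝ) ^ 2
              + (1 / (K : ℝ) - 1 / (K : ℝ)) = ((K : ℝ))⁻¹ ^ 2 := by
            push_cast
            field_simp
            ring
          rw [heq]
          exact hle
        · have h1 : min (n+1) K = K := by omega
          have h2 : min n K = K := by omega
          have h3 : max n K = n := by omega
          have h4 : max (n+1) K = n+1 := by omega
          rw [h1, h2, h3, h4]
          have hn1 : 1 ≤ n := by omega
          have hnpos : (0 : ℝ) < n := by exact_mod_cast hn1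
          have hv1 : ((n : ℝ) + 1) ≤ (v x₀ : ℝ) := by exact_mod_cast hcard
          have hle : ((v x₀ : ℝ))⁻¹ ^ 2 ≤ 1 / ((n : ℝ) * ((n : ℝ) + 1)) := by
            rw [inv_pow, inv_eq_one_div]
            have h6 : (0 : ℝ) < (n : ℝ) * ((n : ℝ) + 1) := by positivity
            apply one_div_le_one_div_of_le h6
            nlinarith
          have heq : ((K : ℕ) : ℝ) / (K : ℝ) ^ 2 - ((K : ℕ) : ℝ) / (K : ℝ) ^ 2
              + (1 / ((n : ℕ) : ℝ) - 1 / (((n+1 : ℕ)) : ℝ)) = 1 / ((n : ℝ) * ((n : ℝ) + 1)) := by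
            push_cast
            field_simp
            ring
          rw [heq]
          exact hle
      linarith

private lemma sparse_sum {α : Type*} (K : ℕ) (hK : 1 ≤ K) (F : Finset α) (v : α → ℕ)
    (hv : ∀ x ∈ F, K ≤ v x) (hsp : ∀ j : ℕ, (F.filter fun x => v x ≤ j).card ≤ j) :
    ∑ x ∈ F, ((v x : ℝ))⁻¹ ^ 2 ≤ 2 / (K : ℝ) := by
  classical
  have hKpos : (0 : ℝ) < K := by exact_mod_cast hK
  have h := sumAux K hK F.card F v rfl hv hsp
  have h1 : ((min F.card K : ℕ) : ℝ) ≤ (K : ℝ) := by exact_mod_cast min_le_right F.card K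
  have h2 : (0 : ℝ) ≤ 1 / ((max F.card K : ℕ) : ℝ) := by positivity
  have h3 : (K : ℝ) / (K : ℝ) ^ 2 = 1 / (K : ℝ) := by rw [sq]; field_simp
  calc ∑ x ∈ F, ((v x : ℝ))⁻¹ ^ 2
      ≤ ((min F.card K : ℕ) : ℝ) / (K : ℝ) ^ 2 + (1 / (K : ℝ) - 1 / ((max F.card K : ℕ) : ℝ)) := h
    _ ≤ (K : ℝ) / (K : ℝ) ^ 2 + (1 / (K : ℝ) - 0) := by
        gcongr
    _ = 2 / (K : ℝ) := by rw [h3]; ring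

open scoped ENNReal

private lemma enn_inv_sq (n : ℕ) (hn : 0 < n) :
    ((n : ℝ≥0∞))⁻¹ ^ 2 = ENNReal.ofReal (((n : ℝ))⁻¹ ^ 2) := by
  have hn' : (0 : ℝ) < n := by exact_mod_cast hn
  rw [ENNReal.ofReal_pow (by positivity), ENNReal.ofReal_inv_of_pos hn',
    ENNReal.ofReal_natCast]


open scoped ENNReal

open BratteliDiagram in
/-- Uniform tail estimate (the quantitative heart of Theorem 4.8): for every `ε > 0`
there is `M ≥ 0` such that for every infinite path `y`, the sum of `ℓ(x,y)⁻²` over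
all `x` tail-equivalent to `y` with `ℓ(x,y) > M` is at most `ε`. -/
theorem bratteliLen_uniform_tail_estimate (B : BratteliDiagram) (hB : B.FinSources)
    (ε : ℝ) (hε : 0 < ε) :
    ∃ M : ℝ, 0 ≤ M ∧ ∀ y : B.InfPath,
      (∑' x : {x : B.InfPath // TailEquiv x y ∧ M < (len x y : ℝ)},
          ((len x.1 y : ℝ≥0∞))⁻¹ ^ 2) ≤ ENNReal.ofReal ε := by
  classical
  set K0 : ℕ := ⌈2 / ε⌉₊ with hK0def
  set K : ℕ := K0 + 1 with hKdef
  have hK1 : 1 ≤ K := by omega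
  have hKε : 2 / (K : ℝ) ≤ ε := by
    have h1 : 2 / ε ≤ (K0 : ℝ) := Nat.le_ceil _
    have h2 : 2 / ε ≤ (K : ℝ) := by
      refine h1.trans ?_
      push_cast
      exact_mod_cast (show K0 ≤ K by omega)
    have hKpos : (0 : ℝ) < K := by positivity
    rw [div_le_iff₀ hε] at h2
    rw [div_le_iff₀ hKpos]
    nlinarith
  refine ⟨(K0 : ℝ), Nat.cast_nonneg _, ?_⟩
  intro y
  rw [ENNReal.tsum_eq_iSup_sum]
  refine iSup_le fun F => ?_
  -- basic facts about elements of the subtype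
  have hlen : ∀ x : {x : B.InfPath // TailEquiv x y ∧ (K0 : ℝ) < (len x y : ℝ)},
      K ≤ len x.1 y := by
    intro x
    have h1 : (K0 : ℝ) < (len x.1 y : ℝ) := x.2.2
    have h2 : K0 < len x.1 y := by exact_mod_cast h1
    omega
  have hne : ∀ x : {x : B.InfPath // TailEquiv x y ∧ (K0 : ℝ) < (len x y : ℝ)},
      x.1 ≠ y := by
    intro x hxy
    have h1 := hlen x
    rw [hxy, len_self] at h1
    omega
  -- sparsity
  have hsp : ∀ j : ℕ, (F.filter fun x => len x.1 y ≤ j).card ≤ j := by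
    intro j
    set F' := F.filter (fun x => len x.1 y ≤ j) with hF'def
    rcases F'.eq_empty_or_nonempty with he | hne'
    · rw [he]; simp
    obtain ⟨x₀, hx₀, hmax⟩ := Finset.exists_max_image F' (fun x => kIdx x.1 y) hne'
    set k : ℕ := kIdx x₀.1 y with hkdef
    haveI : Finite (B.V k) := B.vFinite k
    haveI : ∀ w : B.V k, Finite (B.PathEnd k w) := finite_pathEnd B k
    haveI : Finite (Σ w : B.V k, B.PathEnd k w) := inferInstance
    haveI := Fintype.ofFinite (Σ w : B.V k, B.PathEnd k w)
    have hinj : F'.card ≤ Fintype.card (Σ w : B.V k, B.PathEnd k w) := by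
      rw [← Finset.card_univ]
      apply Finset.card_le_card_of_injOn
        (fun x => if h : x.1.start ≤ k then
            (⟨vertexAt x.1 k h, prefixPath x.1 k h⟩ : Σ w, B.PathEnd k w)
          else (nonempty_pathEndSigma B k).some)
        (fun _ _ => Finset.mem_univ _)
      intro x hx x' hx' hEq
      simp only [Finset.mem_coe] at hx hx'
      have ax : AgreesFrom x.1 y k :=
        (agreesFrom_kIdx x.2.1).mono (hmax x hx)
      have ax' : AgreesFrom x'.1 y k :=
        (agreesFrom_kIdx x'.2.1).mono (hmax x' hx')
      obtain ⟨hx1, hy1, e1⟩ := ax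
      obtain ⟨hx2, hy2, e2⟩ := ax'
      simp only at hEq
      rw [dif_pos hx1, dif_pos hx2] at hEq
      exact Subtype.ext (prefix_inj hx1 hx2 hy1 e1 e2 hEq)
    have hcount : Fintype.card (Σ w : B.V k, B.PathEnd k w) = B.pathCount k := by
      rw [pathCount, Nat.card_eq_fintype_card]
    have hlenx₀ : B.pathCount k = len x₀.1 y := (len_eq (hne x₀)).symm
    have hx₀j : len x₀.1 y ≤ j := (Finset.mem_filter.mp hx₀).2
    omega
  -- conversion to real sums
  calc ∑ x ∈ F, ((len x.1 y : ℝ≥0∞))⁻¹ ^ 2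
      = ∑ x ∈ F, ENNReal.ofReal (((len x.1 y : ℝ))⁻¹ ^ 2) :=
        Finset.sum_congr rfl fun x _ => enn_inv_sq _ (by have := hlen x; omega)
    _ = ENNReal.ofReal (∑ x ∈ F, ((len x.1 y : ℝ))⁻¹ ^ 2) :=
        (ENNReal.ofReal_sum_of_nonneg fun x _ => by positivity).symm
    _ ≤ ENNReal.ofReal ε := by
        apply ENNReal.ofReal_le_ofReal
        exact le_trans (sparse_sum K hK1 F (fun x => len x.1 y) (fun x _ => hlen x) hsp) hKε
end

section
/- Let B be a Bratteli diagram with finitely many sources. If sup_k c_k < ∞, where c_k is the total number of finite paths from the sources to level k, then the infinite path space X_B is finite; consequently the set of pairs (x,y) ∈ X_B × X_B of tail-equivalent infinite paths is finite. -/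
namespace BratteliDiagram

variable {B : BratteliDiagram}

lemma isSource_start_cast (x : B.InfPath) (k : ℕ) (hk : x.start = k) (h : x.start ≤ k) :
    B.IsSource k (B.src k (x.edge k h)) := by
  subst hk; exact x.start_isSource

def trunc (x : B.InfPath) : (k : ℕ) → (h : x.start ≤ k) → B.PathEnd k (B.src k (x.edge k h))
  | 0, _ => ⟨trivial⟩
  | k + 1, h =>
    if hk : x.start = k + 1 then
      Sum.inl ⟨isSource_start_cast x (k + 1) hk h⟩
    else
      have hk' : x.start ≤ k := by omega
      Sum.inr ⟨x.edge k hk', ⟨⟨(x.compat k hk').symm⟩, trunc x k hk'⟩⟩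

def startOf : (k : ℕ) → (Σ w : B.V k, B.PathEnd k w) → ℕ
  | 0, _ => 0
  | k + 1, p =>
    match p.2 with
    | Sum.inl _ => k + 1
    | Sum.inr ⟨e, _, q⟩ => startOf k ⟨B.src k e, q⟩

def edgeOf : (k : ℕ) → (Σ w : B.V k, B.PathEnd k w) → (m : ℕ) → Option (B.E m)
  | 0, _, _ => none
  | k + 1, p, m =>
    match p.2 with
    | Sum.inl _ => none
    | Sum.inr ⟨e, _, q⟩ =>
      if h : m = k then some (cast (congrArg B.E h.symm) e)
      else edgeOf k ⟨B.src k e, q⟩ m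

lemma startOf_trunc (x : B.InfPath) : ∀ (k : ℕ) (h : x.start ≤ k),
    startOf k ⟨_, trunc x k h⟩ = x.start
  | 0, h => (Nat.le_zero.mp h).symm
  | k + 1, h => by
    by_cases hk : x.start = k + 1
    · have e : trunc x (k+1) h = Sum.inl ⟨isSource_start_cast x (k + 1) hk h⟩ := by
        rw [trunc]; exact dif_pos hk
      rw [e]; simp only [startOf]
      exact hk.symm
    · have hk' : x.start ≤ k := by omega
      have e : trunc x (k+1) h = Sum.inr ⟨x.edge k hk', ⟨⟨(x.compat k hk').symm⟩, trunc x k hk'⟩⟩ := by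
        rw [trunc]; exact dif_neg hk
      rw [e]; simp only [startOf]
      exact startOf_trunc x k hk'

lemma edgeOf_trunc (x : B.InfPath) : ∀ (k : ℕ) (h : x.start ≤ k) (m : ℕ)
    (h1 : x.start ≤ m), m < k → edgeOf k ⟨_, trunc x k h⟩ m = some (x.edge m h1)
  | 0, _, _, _, hm => absurd hm (by omega)
  | k + 1, h, m, h1, hm => by
    have hk : ¬ x.start = k + 1 := by omega
    have hk' : x.start ≤ k := by omega
    have e : trunc x (k+1) h = Sum.inr ⟨x.edge k hk', ⟨⟨(x.compat k hk').symm⟩, trunc x k hk'⟩⟩ := by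
      rw [trunc]; exact dif_neg hk
    rw [e]; simp only [edgeOf]
    by_cases hmk : m = k
    · subst hmk
      simp only [dif_pos rfl]
      rfl
    · rw [dif_neg hmk]
      exact edgeOf_trunc x k hk' m h1 (by omega)


lemma start_eq_of_trunc_eq {x y : B.InfPath} {k : ℕ} {hx : x.start ≤ k} {hy : y.start ≤ k}
    (H : (⟨_, trunc x k hx⟩ : Σ w : B.V k, B.PathEnd k w) = ⟨_, trunc y k hy⟩) :
    x.start = y.start := by
  have h := congrArg (startOf k) H
  rwa [startOf_trunc, startOf_trunc] at h

lemma edge_eq_of_trunc_eq {x y : B.InfPath} {k : ℕ} {hx : x.start ≤ k} {hy : y.start ≤ k}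
    (H : (⟨_, trunc x k hx⟩ : Σ w : B.V k, B.PathEnd k w) = ⟨_, trunc y k hy⟩)
    (m : ℕ) (h1 : x.start ≤ m) (h2 : y.start ≤ m) (hm : m < k) :
    x.edge m h1 = y.edge m h2 := by
  have h := congrArg (fun p => edgeOf k p m) H
  rw [edgeOf_trunc x k hx m h1 hm, edgeOf_trunc y k hy m h2 hm] at h
  exact Option.some.inj h

lemma InfPath.ext'_s8 {x y : B.InfPath} (hs : x.start = y.start)
    (he : ∀ m (h1 : x.start ≤ m) (h2 : y.start ≤ m), x.edge m h1 = y.edge m h2) : x = y := by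
  obtain ⟨s, e, p, q⟩ := x
  obtain ⟨s', e', p', q'⟩ := y
  dsimp at hs he
  subst hs
  have : e = e' := by
    funext n h
    exact he n h h
  subst this
  rfl

lemma pathEnd_finite : ∀ (k : ℕ) (w : B.V k), Finite (B.PathEnd k w)
  | 0, w => by
    show Finite (PLift (B.IsSource 0 w))
    exact Finite.of_subsingleton
  | k + 1, w => by
    haveI := B.eFinite k
    haveI := fun e : B.E k => pathEnd_finite k (B.src k e)
    show Finite (PLift (B.IsSource (k + 1) w) ⊕
        Σ e : B.E k, PLift (B.tgt k e = w) × B.PathEnd k (B.src k e))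
    haveI : ∀ e : B.E k, Finite (PLift (B.tgt k e = w) × B.PathEnd k (B.src k e)) := by
      intro e
      haveI : Finite (PLift (B.tgt k e = w)) := Finite.of_subsingleton
      infer_instance
    infer_instance

end BratteliDiagram

open BratteliDiagram in
/-- Bounded case of Proposition 4.5: if the path counts `c_k` of a Bratteli diagram
with finitely many sources are uniformly bounded, then the infinite path space is
finite, and consequently the set of tail-equivalent pairs is finite. -/
theorem finite_of_pathCount_bounded (B : BratteliDiagram) (hB : B.FinSources)
    (hbd : ∃ C : ℕ, ∀ k : ℕ, B.pathCount k ≤ C) :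
    Finite B.InfPath ∧
      {p : B.InfPath × B.InfPath | TailEquiv p.1 p.2}.Finite := by
  obtain ⟨N, hN⟩ := hB
  obtain ⟨C, hC⟩ := hbd
  have hstart : ∀ x : B.InfPath, x.start ≤ N := by
    intro x
    by_contra h
    exact hN x.start (by omega) _ x.start_isSource
  have hfin : Finite B.InfPath := by
    by_contra hinf
    rw [not_finite_iff_infinite] at hinf
    let f := Infinite.natEmbedding B.InfPath
    let g : Fin (C + 1) → B.InfPath := fun i => f i
    have hg : Function.Injective g := fun i j h => Fin.val_injective (f.injective h)
    -- witness levels where pairs with equal starts must differ in an edge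
    let P : Fin (C + 1) → Fin (C + 1) → Prop := fun i j =>
      ∃ m, ∃ h1 : (g i).start ≤ m, ∃ h2 : (g j).start ≤ m, (g i).edge m h1 ≠ (g j).edge m h2
    have key : ∀ i j : Fin (C + 1), i ≠ j → (g i).start = (g j).start → P i j := by
      intro i j hne hs
      by_contra h
      simp only [P, not_exists] at h
      refine hne (hg (InfPath.ext'_s8 hs fun m h1 h2 => ?_))
      by_contra hcontra
      exact h m h1 h2 hcontra
    classical
    let D : Fin (C + 1) → Fin (C + 1) → ℕ := fun i j => if h : P i j then h.choose else 0
    let K := N + 1 + Finset.sup Finset.univ (fun p : Fin (C + 1) × Fin (C + 1) => D p.1 p.2)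
    have hK : ∀ i : Fin (C + 1), (g i).start ≤ K := fun i => le_trans (hstart _) (by omega)
    have hDK : ∀ i j : Fin (C + 1), D i j < K := by
      intro i j
      have : D i j ≤ Finset.sup Finset.univ (fun p : Fin (C + 1) × Fin (C + 1) => D p.1 p.2) :=
        Finset.le_sup (f := fun p : Fin (C + 1) × Fin (C + 1) => D p.1 p.2)
          (Finset.mem_univ (i, j))
      omega
    have hT : Function.Injective
        (fun i : Fin (C + 1) => (⟨_, trunc (g i) K (hK i)⟩ : Σ w : B.V K, B.PathEnd K w)) := by
      intro i j hEq
      by_contra hne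
      simp only at hEq
      have hs : (g i).start = (g j).start := start_eq_of_trunc_eq hEq
      have hP : P i j := key i j hne hs
      have hD : D i j = hP.choose := dif_pos hP
      obtain ⟨h1, h2, hdiff⟩ := hP.choose_spec
      exact hdiff (edge_eq_of_trunc_eq hEq hP.choose h1 h2 (by have := hDK i j; omega))
    haveI := B.vFinite K
    haveI := fun w : B.V K => pathEnd_finite (B := B) K w
    have hcard := Nat.card_le_card_of_injective _ hT
    rw [Nat.card_eq_fintype_card, Fintype.card_fin] at hcard
    have : B.pathCount K ≤ C := hC K
    rw [pathCount] at this
    omega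
  refine ⟨hfin, ?_⟩
  haveI := hfin
  exact Set.toFinite _
end
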